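/- For any γ > 0 and A_K > 0, the blood flow wave-curve branch function f_K, defined by f_K(A) = 4 ζ (A^{1/4} − A_K^{1/4}) with ζ = √(3γ/2) for 0 < A < A_K and f_K(A) = √(γ (A − A_K)(A^{3/2} − A_K^{3/2})/(A A_K)) for A ≥ A_K, is concave on (0, ∞). -/

import Mathlib

/-- Blood flow wave-curve branch function for a state with area `AK`:
rarefaction branch for `A < AK`, shock branch for `A ≥ AK`; here
`ζ = √(3γ/2)`. -/
noncomputable def bfeBranch (γ AK A : ℝ) : ℝ :=
  if A < AK then
    4 * Real.sqrt (3 * γ / 2) * (A ^ ((1 : ℝ) / 4) - AK ^ ((1 : ℝ) / 4))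
  else
    Real.sqrt (γ * (A - AK) * (A ^ ((3 : ℝ) / 2) - AK ^ ((3 : ℝ) / 2)) / (A * AK))

open Real Set

noncomputable def bfeG (γ AK A : ℝ) : ℝ :=
  γ * (A - AK) * (A * Real.sqrt A - AK * Real.sqrt AK) / (A * AK)

noncomputable def bfeGd (γ AK A : ℝ) : ℝ :=
  γ / AK * (3 / 2 * Real.sqrt A - AK / (2 * Real.sqrt A) - AK ^ 2 * Real.sqrt AK / A ^ 2)

lemma hasDerivAt_mul_sqrt {A : ℝ} (hA : 0 < A) :
    HasDerivAt (fun B : ℝ => B * Real.sqrt B) (3 / 2 * Real.sqrt A) A := by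
  have h := (hasDerivAt_id' A).mul (Real.hasDerivAt_sqrt hA.ne')
  refine h.congr_deriv (Eq.symm ?_)
  set x := Real.sqrt A with hxd
  have hx0 : x ≠ 0 := by positivity
  rw [show A = x ^ 2 from (Real.sq_sqrt hA.le).symm]
  field_simp
  ring

lemma hasDerivAt_bfeG {γ AK A : ℝ} (hA : 0 < A) (hAK : 0 < AK) :
    HasDerivAt (bfeG γ AK) (bfeGd γ AK A) A := by
  have hnum : HasDerivAt (fun B : ℝ => γ * (B - AK) * (B * Real.sqrt B - AK * Real.sqrt AK))
      (γ * 1 * (A * Real.sqrt A - AK * Real.sqrt AK)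
        + γ * (A - AK) * (3 / 2 * Real.sqrt A)) A := by
    have h1 : HasDerivAt (fun B : ℝ => γ * (B - AK)) (γ * 1) A :=
      (((hasDerivAt_id A).sub_const AK).const_mul γ)
    exact h1.mul ((hasDerivAt_mul_sqrt hA).sub_const (AK * Real.sqrt AK))
  have hden : HasDerivAt (fun B : ℝ => B * AK) AK A := by
    simpa using (hasDerivAt_id A).mul_const AK
  have h := hnum.div hden (by positivity)
  refine h.congr_deriv (Eq.symm ?_)
  unfold bfeGd
  set x := Real.sqrt A with hxd
  set c := Real.sqrt AK with hcd
  have hx0 : x ≠ 0 := by positivity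
  have hc0 : c ≠ 0 := by positivity
  rw [show A = x ^ 2 from (Real.sq_sqrt hA.le).symm,
      show AK = c ^ 2 from (Real.sq_sqrt hAK.le).symm]
  field_simp
  ring

noncomputable def bfeGdd (γ AK A : ℝ) : ℝ :=
  γ / AK * (3 / (4 * Real.sqrt A) + AK / (4 * (A * Real.sqrt A))
    + 2 * AK ^ 2 * Real.sqrt AK / A ^ 3)

lemma hasDerivAt_bfeGd {γ AK A : ℝ} (hA : 0 < A) (hAK : 0 < AK) :
    HasDerivAt (bfeGd γ AK) (bfeGdd γ AK A) A := by
  have hx0 : Real.sqrt A ≠ 0 := by positivity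
  have h1 : HasDerivAt (fun B : ℝ => 3 / 2 * Real.sqrt B) (3 / 2 * (1 / (2 * Real.sqrt A))) A :=
    (Real.hasDerivAt_sqrt hA.ne').const_mul (3 / 2)
  have h2 : HasDerivAt (fun B : ℝ => AK / (2 * Real.sqrt B))
      ((0 * (2 * Real.sqrt A) - AK * (2 * (1 / (2 * Real.sqrt A)))) / (2 * Real.sqrt A) ^ 2) A :=
    (hasDerivAt_const A AK).div ((Real.hasDerivAt_sqrt hA.ne').const_mul 2) (by positivity)
  have h3 : HasDerivAt (fun B : ℝ => AK ^ 2 * Real.sqrt AK / B ^ 2)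
      ((0 * A ^ 2 - AK ^ 2 * Real.sqrt AK * (2 * A ^ 1)) / (A ^ 2) ^ 2) A :=
    (hasDerivAt_const A (AK ^ 2 * Real.sqrt AK)).div (hasDerivAt_pow 2 A) (by positivity)
  have h := (((h1.sub h2).sub h3).const_mul (γ / AK))
  refine h.congr_deriv (Eq.symm ?_)
  unfold bfeGdd
  set x := Real.sqrt A with hxd
  set c := Real.sqrt AK with hcd
  have hx0' : x ≠ 0 := by positivity
  rw [show A = x ^ 2 from (Real.sq_sqrt hA.le).symm]
  field_simp
  ring

lemma bfe_key0 {c x : ℝ} (hc : 0 ≤ c) (hcx : c ≤ x) :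
    0 ≤ 3 * x ^ 5 - c ^ 2 * x ^ 3 - 2 * c ^ 5 := by
  obtain ⟨t, ht, rfl⟩ : ∃ t, 0 ≤ t ∧ x = c + t := ⟨x - c, by linarith, by ring⟩
  have h : 3 * (c + t) ^ 5 - c ^ 2 * (c + t) ^ 3 - 2 * c ^ 5
      = 3 * t ^ 5 + 15 * c * t ^ 4 + 29 * c ^ 2 * t ^ 3 + 27 * c ^ 3 * t ^ 2
        + 12 * c ^ 4 * t := by ring
  rw [h]; positivity

lemma bfe_key1 {c x : ℝ} (hc : 0 ≤ c) (hcx : c ≤ x) :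
    2 * (x ^ 5 - c ^ 2 * x ^ 3 - c ^ 3 * x ^ 2 + c ^ 5) * (3 * x ^ 5 + c ^ 2 * x ^ 3 + 8 * c ^ 5)
      ≤ (3 * x ^ 5 - c ^ 2 * x ^ 3 - 2 * c ^ 5) ^ 2 := by
  obtain ⟨t, ht, rfl⟩ : ∃ t, 0 ≤ t ∧ x = c + t := ⟨x - c, by linarith, by ring⟩
  have h : (3 * (c + t) ^ 5 - c ^ 2 * (c + t) ^ 3 - 2 * c ^ 5) ^ 2
      - 2 * ((c + t) ^ 5 - c ^ 2 * (c + t) ^ 3 - c ^ 3 * (c + t) ^ 2 + c ^ 5)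
        * (3 * (c + t) ^ 5 + c ^ 2 * (c + t) ^ 3 + 8 * c ^ 5)
      = 3 * t ^ 10 + 30 * c * t ^ 9 + 133 * c ^ 2 * t ^ 8 + 350 * c ^ 3 * t ^ 7
        + 619 * c ^ 4 * t ^ 6 + 756 * c ^ 5 * t ^ 5 + 585 * c ^ 6 * t ^ 4
        + 216 * c ^ 7 * t ^ 3 := by ring
  nlinarith [h, pow_nonneg ht 10, mul_nonneg hc (pow_nonneg ht 9),
    mul_nonneg (pow_nonneg hc 2) (pow_nonneg ht 8),
    mul_nonneg (pow_nonneg hc 3) (pow_nonneg ht 7),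
    mul_nonneg (pow_nonneg hc 4) (pow_nonneg ht 6),
    mul_nonneg (pow_nonneg hc 5) (pow_nonneg ht 5),
    mul_nonneg (pow_nonneg hc 6) (pow_nonneg ht 4),
    mul_nonneg (pow_nonneg hc 7) (pow_nonneg ht 3)]

lemma bfe_key2 {c x : ℝ} (hc : 0 ≤ c) (hcx : c ≤ x) :
    c * (3 * x ^ 5 - c ^ 2 * x ^ 3 - 2 * c ^ 5) ^ 2
      ≤ 24 * x ^ 6 * (x ^ 5 - c ^ 2 * x ^ 3 - c ^ 3 * x ^ 2 + c ^ 5) := by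
  obtain ⟨t, ht, rfl⟩ : ∃ t, 0 ≤ t ∧ x = c + t := ⟨x - c, by linarith, by ring⟩
  have h : 24 * (c + t) ^ 6 * ((c + t) ^ 5 - c ^ 2 * (c + t) ^ 3 - c ^ 3 * (c + t) ^ 2 + c ^ 5)
      - c * (3 * (c + t) ^ 5 - c ^ 2 * (c + t) ^ 3 - 2 * c ^ 5) ^ 2
      = 24 * t ^ 11 + 255 * c * t ^ 10 + 1206 * c ^ 2 * t ^ 9 + 3321 * c ^ 3 * t ^ 8
        + 5832 * c ^ 4 * t ^ 7 + 6701 * c ^ 5 * t ^ 6 + 4938 * c ^ 6 * t ^ 5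
        + 2151 * c ^ 7 * t ^ 4 + 432 * c ^ 8 * t ^ 3 := by ring
  nlinarith [h, pow_nonneg ht 11, mul_nonneg hc (pow_nonneg ht 10),
    mul_nonneg (pow_nonneg hc 2) (pow_nonneg ht 9),
    mul_nonneg (pow_nonneg hc 3) (pow_nonneg ht 8),
    mul_nonneg (pow_nonneg hc 4) (pow_nonneg ht 7),
    mul_nonneg (pow_nonneg hc 5) (pow_nonneg ht 6),
    mul_nonneg (pow_nonneg hc 6) (pow_nonneg ht 5),
    mul_nonneg (pow_nonneg hc 7) (pow_nonneg ht 4),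
    mul_nonneg (pow_nonneg hc 8) (pow_nonneg ht 3)]

lemma bfeG_pos {γ AK A : ℝ} (hγ : 0 < γ) (hAK : 0 < AK) (h : AK < A) :
    0 < bfeG γ AK A := by
  have hA : 0 < A := hAK.trans h
  have hs : Real.sqrt AK < Real.sqrt A := Real.sqrt_lt_sqrt hAK.le h
  have hs0 : 0 < Real.sqrt AK := Real.sqrt_pos.mpr hAK
  have hnum : AK * Real.sqrt AK < A * Real.sqrt A := by nlinarith
  unfold bfeG
  have : 0 < γ * (A - AK) * (A * Real.sqrt A - AK * Real.sqrt AK) := by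
    apply mul_pos (mul_pos hγ (by linarith)) (by linarith)
  positivity

lemma bfeGd_nonneg {γ AK A : ℝ} (hγ : 0 < γ) (hAK : 0 < AK) (h : AK ≤ A) :
    0 ≤ bfeGd γ AK A := by
  have hA : 0 < A := lt_of_lt_of_le hAK h
  unfold bfeGd
  set x := Real.sqrt A with hxd
  set c := Real.sqrt AK with hcd
  have hx : 0 < x := Real.sqrt_pos.mpr hA
  have hc : 0 ≤ c := Real.sqrt_nonneg AK
  have hcx : c ≤ x := Real.sqrt_le_sqrt h
  have hkey := bfe_key0 hc hcx
  rw [show A = x ^ 2 from (Real.sq_sqrt hA.le).symm,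
      show AK = c ^ 2 from (Real.sq_sqrt hAK.le).symm]
  have hE : 3 / 2 * x - c ^ 2 / (2 * x) - (c ^ 2) ^ 2 * c / (x ^ 2) ^ 2
      = (3 * x ^ 5 - c ^ 2 * x ^ 3 - 2 * c ^ 5) / (2 * x ^ 4) := by
    field_simp
  rw [hE]
  positivity

lemma bfe_I1 {γ AK A : ℝ} (hγ : 0 < γ) (hAK : 0 < AK) (h : AK < A) :
    2 * bfeG γ AK A * bfeGdd γ AK A ≤ bfeGd γ AK A ^ 2 := by
  have hA : 0 < A := hAK.trans h
  unfold bfeG bfeGd bfeGdd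
  set x := Real.sqrt A with hxd
  set c := Real.sqrt AK with hcd
  have hx : 0 < x := Real.sqrt_pos.mpr hA
  have hc : 0 < c := Real.sqrt_pos.mpr hAK
  have hcx : c ≤ x := Real.sqrt_le_sqrt h.le
  have hkey := bfe_key1 hc.le hcx
  rw [show A = x ^ 2 from (Real.sq_sqrt hA.le).symm,
      show AK = c ^ 2 from (Real.sq_sqrt hAK.le).symm]
  rw [← sub_nonneg]
  have hE : (γ / c ^ 2 * (3 / 2 * x - c ^ 2 / (2 * x) - (c ^ 2) ^ 2 * c / (x ^ 2) ^ 2)) ^ 2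
      - 2 * (γ * (x ^ 2 - c ^ 2) * (x ^ 2 * x - c ^ 2 * c) / (x ^ 2 * c ^ 2))
        * (γ / c ^ 2 * (3 / (4 * x) + c ^ 2 / (4 * (x ^ 2 * x)) + 2 * (c ^ 2) ^ 2 * c / (x ^ 2) ^ 3))
      = γ ^ 2 / (4 * c ^ 4 * x ^ 8)
        * ((3 * x ^ 5 - c ^ 2 * x ^ 3 - 2 * c ^ 5) ^ 2
          - 2 * (x ^ 5 - c ^ 2 * x ^ 3 - c ^ 3 * x ^ 2 + c ^ 5)
            * (3 * x ^ 5 + c ^ 2 * x ^ 3 + 8 * c ^ 5)) := by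
    field_simp; ring
  rw [hE]
  have h1 : (0:ℝ) ≤ γ ^ 2 / (4 * c ^ 4 * x ^ 8) := by positivity
  exact mul_nonneg h1 (by linarith)

lemma bfe_I2 {γ AK A : ℝ} (hγ : 0 < γ) (hAK : 0 < AK) (h : AK < A) :
    bfeGd γ AK A ^ 2 ≤ 6 * γ / (AK * Real.sqrt AK) * bfeG γ AK A := by
  have hA : 0 < A := hAK.trans h
  unfold bfeG bfeGd
  set x := Real.sqrt A with hxd
  set c := Real.sqrt AK with hcd
  have hx : 0 < x := Real.sqrt_pos.mpr hA
  have hc : 0 < c := Real.sqrt_pos.mpr hAK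
  have hcx : c ≤ x := Real.sqrt_le_sqrt h.le
  have hkey := bfe_key2 hc.le hcx
  rw [show A = x ^ 2 from (Real.sq_sqrt hA.le).symm,
      show AK = c ^ 2 from (Real.sq_sqrt hAK.le).symm]
  rw [← sub_nonneg]
  have hE : 6 * γ / (c ^ 2 * c) * (γ * (x ^ 2 - c ^ 2) * (x ^ 2 * x - c ^ 2 * c) / (x ^ 2 * c ^ 2))
      - (γ / c ^ 2 * (3 / 2 * x - c ^ 2 / (2 * x) - (c ^ 2) ^ 2 * c / (x ^ 2) ^ 2)) ^ 2
      = γ ^ 2 / (4 * c ^ 5 * x ^ 8)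
        * (24 * x ^ 6 * (x ^ 5 - c ^ 2 * x ^ 3 - c ^ 3 * x ^ 2 + c ^ 5)
          - c * (3 * x ^ 5 - c ^ 2 * x ^ 3 - 2 * c ^ 5) ^ 2) := by
    field_simp; ring
  rw [hE]
  have h1 : (0:ℝ) ≤ γ ^ 2 / (4 * c ^ 5 * x ^ 8) := by positivity
  exact mul_nonneg h1 (by linarith)

noncomputable def bfeSd (γ AK A : ℝ) : ℝ := bfeGd γ AK A / (2 * Real.sqrt (bfeG γ AK A))

lemma hasDerivAt_bfeSd {γ AK A : ℝ} (hγ : 0 < γ) (hAK : 0 < AK) (h : AK < A) :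
    HasDerivAt (bfeSd γ AK)
      ((2 * bfeGdd γ AK A * bfeG γ AK A - bfeGd γ AK A ^ 2)
        / (4 * bfeG γ AK A * Real.sqrt (bfeG γ AK A))) A := by
  have hA : 0 < A := hAK.trans h
  have hg : 0 < bfeG γ AK A := bfeG_pos hγ hAK h
  have hsg : 0 < Real.sqrt (bfeG γ AK A) := Real.sqrt_pos.mpr hg
  have hsq : Real.sqrt (bfeG γ AK A) * Real.sqrt (bfeG γ AK A) = bfeG γ AK A :=
    Real.mul_self_sqrt hg.le
  have h1 : HasDerivAt (fun B => Real.sqrt (bfeG γ AK B))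
      (1 / (2 * Real.sqrt (bfeG γ AK A)) * bfeGd γ AK A) A :=
    (Real.hasDerivAt_sqrt hg.ne').comp A (hasDerivAt_bfeG hA hAK)
  have h2 := ((hasDerivAt_bfeGd hA hAK).div (h1.const_mul 2) (by positivity) :
      HasDerivAt (fun B => bfeGd γ AK B / (2 * Real.sqrt (bfeG γ AK B))) _ A)
  refine h2.congr_deriv (Eq.symm ?_)
  set s := Real.sqrt (bfeG γ AK A) with hsd
  have hs0 : s ≠ 0 := ne_of_gt hsg
  rw [show bfeG γ AK A = s ^ 2 from (Real.sq_sqrt hg.le).symm]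
  field_simp
  ring

lemma bfeSd_antitoneOn {γ AK : ℝ} (hγ : 0 < γ) (hAK : 0 < AK) :
    AntitoneOn (bfeSd γ AK) (Set.Ioi AK) := by
  have hderiv : ∀ A ∈ Set.Ioi AK, HasDerivAt (bfeSd γ AK)
      ((2 * bfeGdd γ AK A * bfeG γ AK A - bfeGd γ AK A ^ 2)
        / (4 * bfeG γ AK A * Real.sqrt (bfeG γ AK A))) A :=
    fun A hA => hasDerivAt_bfeSd hγ hAK hA
  have hdiff : DifferentiableOn ℝ (bfeSd γ AK) (Set.Ioi AK) :=
    fun A hA => ((hderiv A hA).differentiableAt).differentiableWithinAt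
  apply antitoneOn_of_deriv_nonpos (convex_Ioi AK) hdiff.continuousOn
  · rw [interior_Ioi]; exact hdiff
  · intro A hA
    rw [interior_Ioi] at hA
    rw [(hderiv A hA).deriv]
    have hg : 0 < bfeG γ AK A := bfeG_pos hγ hAK hA
    have hnum : 2 * bfeGdd γ AK A * bfeG γ AK A - bfeGd γ AK A ^ 2 ≤ 0 := by
      have := bfe_I1 hγ hAK hA
      linarith [this]
    have hden : 0 < 4 * bfeG γ AK A * Real.sqrt (bfeG γ AK A) := by positivity
    exact div_nonpos_of_nonpos_of_nonneg hnum hden.le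

lemma bfeSd_le {γ AK A : ℝ} (hγ : 0 < γ) (hAK : 0 < AK) (h : AK < A) :
    bfeSd γ AK A ≤ Real.sqrt (3 * γ / 2) / (Real.sqrt AK * Real.sqrt (Real.sqrt AK)) := by
  set v := Real.sqrt (3 * γ / 2) / (Real.sqrt AK * Real.sqrt (Real.sqrt AK)) with hvd
  have hg : 0 < bfeG γ AK A := bfeG_pos hγ hAK h
  have hsg : 0 < Real.sqrt (bfeG γ AK A) := Real.sqrt_pos.mpr hg
  have hv : 0 < v := by
    apply div_pos (Real.sqrt_pos.mpr (by positivity))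
    have := Real.sqrt_pos.mpr hAK
    positivity
  have hb : bfeGd γ AK A ≤ v * (2 * Real.sqrt (bfeG γ AK A)) := by
    have hsq : bfeGd γ AK A ^ 2 ≤ (v * (2 * Real.sqrt (bfeG γ AK A))) ^ 2 := by
      have hI2 := bfe_I2 hγ hAK h
      have hveq : (v * (2 * Real.sqrt (bfeG γ AK A))) ^ 2
          = 6 * γ / (AK * Real.sqrt AK) * bfeG γ AK A := by
        rw [hvd]
        have h1 : Real.sqrt (3 * γ / 2) ^ 2 = 3 * γ / 2 := Real.sq_sqrt (by positivity)
        have h2 : Real.sqrt (Real.sqrt AK) ^ 2 = Real.sqrt AK :=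
          Real.sq_sqrt (Real.sqrt_nonneg AK)
        have h3 : Real.sqrt AK ^ 2 = AK := Real.sq_sqrt hAK.le
        have h4 : Real.sqrt (bfeG γ AK A) ^ 2 = bfeG γ AK A := Real.sq_sqrt hg.le
        have hv2 : (Real.sqrt (3 * γ / 2) / (Real.sqrt AK * Real.sqrt (Real.sqrt AK))) ^ 2
            = 3 * γ / 2 / (AK * Real.sqrt AK) := by
          rw [div_pow, mul_pow, h1, h2, h3]
        calc (Real.sqrt (3 * γ / 2) / (Real.sqrt AK * Real.sqrt (Real.sqrt AK))
              * (2 * Real.sqrt (bfeG γ AK A))) ^ 2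
            = (Real.sqrt (3 * γ / 2) / (Real.sqrt AK * Real.sqrt (Real.sqrt AK))) ^ 2 * 4
              * Real.sqrt (bfeG γ AK A) ^ 2 := by ring
          _ = 3 * γ / 2 / (AK * Real.sqrt AK) * 4 * bfeG γ AK A := by rw [hv2, h4]
          _ = 6 * γ / (AK * Real.sqrt AK) * bfeG γ AK A := by ring
      linarith [hveq ▸ hI2]
    nlinarith [hsq, bfeGd_nonneg hγ hAK h.le, mul_pos hv (by positivity :
      (0:ℝ) < 2 * Real.sqrt (bfeG γ AK A))]
  rw [bfeSd, div_le_iff₀ (by positivity)]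
  linarith [hb]

lemma hasDerivAt_bfeRare {γ AK A : ℝ} (hA : 0 < A) :
    HasDerivAt (fun B => 4 * Real.sqrt (3 * γ / 2)
        * (Real.sqrt (Real.sqrt B) - Real.sqrt (Real.sqrt AK)))
      (Real.sqrt (3 * γ / 2) / (Real.sqrt A * Real.sqrt (Real.sqrt A))) A := by
  have hsA : 0 < Real.sqrt A := Real.sqrt_pos.mpr hA
  have hssA : 0 < Real.sqrt (Real.sqrt A) := Real.sqrt_pos.mpr hsA
  have h1 : HasDerivAt Real.sqrt (1 / (2 * Real.sqrt A)) A := Real.hasDerivAt_sqrt hA.ne'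
  have h2 : HasDerivAt Real.sqrt (1 / (2 * Real.sqrt (Real.sqrt A))) (Real.sqrt A) :=
    Real.hasDerivAt_sqrt hsA.ne'
  have h3 : HasDerivAt (fun B => Real.sqrt (Real.sqrt B))
      (1 / (2 * Real.sqrt (Real.sqrt A)) * (1 / (2 * Real.sqrt A))) A := h2.comp A h1
  have h4 := (h3.const_mul (4 * Real.sqrt (3 * γ / 2))).sub_const
      (4 * Real.sqrt (3 * γ / 2) * Real.sqrt (Real.sqrt AK))
  have hfun : (fun B => 4 * Real.sqrt (3 * γ / 2)
        * (Real.sqrt (Real.sqrt B) - Real.sqrt (Real.sqrt AK)))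
      = fun B => 4 * Real.sqrt (3 * γ / 2) * Real.sqrt (Real.sqrt B)
        - 4 * Real.sqrt (3 * γ / 2) * Real.sqrt (Real.sqrt AK) := by
    funext B; ring
  rw [hfun]
  refine h4.congr_deriv (Eq.symm ?_)
  field_simp
  ring

noncomputable def bfeF (γ AK A : ℝ) : ℝ :=
  if A < AK then
    4 * Real.sqrt (3 * γ / 2) * (Real.sqrt (Real.sqrt A) - Real.sqrt (Real.sqrt AK))
  else Real.sqrt (bfeG γ AK A)

noncomputable def bfeD (γ AK A : ℝ) : ℝ :=
  if A ≤ AK then Real.sqrt (3 * γ / 2) / (Real.sqrt A * Real.sqrt (Real.sqrt A))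
  else bfeSd γ AK A

lemma bfeF_at_AK {γ AK : ℝ} (hAK : 0 < AK) : bfeF γ AK AK = 0 := by
  simp [bfeF, bfeG]

lemma hasDerivAt_bfeF_of_lt {γ AK A : ℝ} (hA : 0 < A) (h : A < AK) :
    HasDerivAt (bfeF γ AK)
      (Real.sqrt (3 * γ / 2) / (Real.sqrt A * Real.sqrt (Real.sqrt A))) A := by
  apply (hasDerivAt_bfeRare (AK := AK) hA).congr_of_eventuallyEq
  filter_upwards [eventually_lt_nhds h] with B hB
  simp [bfeF, hB]

lemma hasDerivAt_bfeF_of_gt {γ AK A : ℝ} (hγ : 0 < γ) (hAK : 0 < AK) (h : AK < A) :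
    HasDerivAt (bfeF γ AK) (bfeSd γ AK A) A := by
  have hA : 0 < A := hAK.trans h
  have hg : 0 < bfeG γ AK A := bfeG_pos hγ hAK h
  have h1 : HasDerivAt (fun B => Real.sqrt (bfeG γ AK B))
      (1 / (2 * Real.sqrt (bfeG γ AK A)) * bfeGd γ AK A) A :=
    (Real.hasDerivAt_sqrt hg.ne').comp A (hasDerivAt_bfeG hA hAK)
  have h2 : HasDerivAt (fun B => Real.sqrt (bfeG γ AK B)) (bfeSd γ AK A) A := by
    convert h1 using 1
    rw [bfeSd]; ring
  apply h2.congr_of_eventuallyEq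
  filter_upwards [eventually_gt_nhds h] with B hB
  simp [bfeF, not_lt.mpr hB.le]

lemma hasDerivAt_bfeF_at {γ AK : ℝ} (hγ : 0 < γ) (hAK : 0 < AK) :
    HasDerivAt (bfeF γ AK)
      (Real.sqrt (3 * γ / 2) / (Real.sqrt AK * Real.sqrt (Real.sqrt AK))) AK := by
  set v := Real.sqrt (3 * γ / 2) / (Real.sqrt AK * Real.sqrt (Real.sqrt AK)) with hvd
  have hsAK : 0 < Real.sqrt AK := Real.sqrt_pos.mpr hAK
  have hssAK : 0 < Real.sqrt (Real.sqrt AK) := Real.sqrt_pos.mpr hsAK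
  -- left branch
  have hL : HasDerivWithinAt (bfeF γ AK) v (Set.Iic AK) AK := by
    apply ((hasDerivAt_bfeRare (γ := γ) (AK := AK) hAK).hasDerivWithinAt).congr
    · intro B hB
      rcases lt_or_eq_of_le (Set.mem_Iic.mp hB) with hB' | hB'
      · simp [bfeF, hB']
      · subst hB'; rw [bfeF_at_AK hAK]; ring
    · rw [bfeF_at_AK hAK]; ring
  -- right branch
  have hR : HasDerivWithinAt (bfeF γ AK) v (Set.Ici AK) AK := by
    rw [hasDerivWithinAt_iff_tendsto_slope]
    have hIci : Set.Ici AK \ {AK} = Set.Ioi AK := Set.Ici_sdiff_left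
    rw [hIci]
    have hmul : HasDerivAt (fun B : ℝ => B * Real.sqrt B) (3 / 2 * Real.sqrt AK) AK :=
      hasDerivAt_mul_sqrt hAK
    have hslope := hasDerivAt_iff_tendsto_slope.mp hmul
    have hsub : Set.Ioi AK ⊆ {AK}ᶜ := fun y hy => ne_of_gt hy
    have hslope' : Filter.Tendsto (slope (fun B : ℝ => B * Real.sqrt B) AK)
        (nhdsWithin AK (Set.Ioi AK)) (nhds (3 / 2 * Real.sqrt AK)) :=
      hslope.mono_left (nhdsWithin_mono _ hsub)
    have hBA : Filter.Tendsto (fun B : ℝ => B * AK) (nhdsWithin AK (Set.Ioi AK))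
        (nhds (AK * AK)) :=
      ((continuous_id.mul continuous_const).tendsto AK).mono_left nhdsWithin_le_nhds
    have hm : Filter.Tendsto
        (fun B : ℝ => γ * slope (fun B : ℝ => B * Real.sqrt B) AK B / (B * AK))
        (nhdsWithin AK (Set.Ioi AK)) (nhds (γ * (3 / 2 * Real.sqrt AK) / (AK * AK))) :=
      (hslope'.const_mul γ).div hBA (by positivity)
    have hcomp := (Real.continuous_sqrt.tendsto (γ * (3 / 2 * Real.sqrt AK) / (AK * AK))).comp hm
    have hval : Real.sqrt (γ * (3 / 2 * Real.sqrt AK) / (AK * AK)) = v := by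
      have hss : Real.sqrt AK * Real.sqrt AK = AK := Real.mul_self_sqrt hAK.le
      have harg : γ * (3 / 2 * Real.sqrt AK) / (AK * AK) = v ^ 2 := by
        rw [hvd, div_pow, mul_pow, Real.sq_sqrt (by positivity : (0:ℝ) ≤ 3 * γ / 2),
          Real.sq_sqrt (Real.sqrt_nonneg AK), Real.sq_sqrt hAK.le]
        field_simp
        linear_combination hss
      rw [harg, Real.sqrt_sq (by positivity)]
    rw [hval] at hcomp
    apply hcomp.congr'
    filter_upwards [self_mem_nhdsWithin] with B (hB : AK < B)
    have hB0 : 0 < B := hAK.trans hB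
    have hBne : B - AK ≠ 0 := by linarith
    have hg : 0 < bfeG γ AK B := bfeG_pos hγ hAK hB
    show Real.sqrt (γ * slope (fun B : ℝ => B * Real.sqrt B) AK B / (B * AK))
        = slope (bfeF γ AK) AK B
    rw [slope_def_field, slope_def_field, bfeF_at_AK hAK, sub_zero]
    have hFB : bfeF γ AK B = Real.sqrt (bfeG γ AK B) := by simp [bfeF, not_lt.mpr hB.le]
    rw [hFB]
    have h1 : Real.sqrt (bfeG γ AK B) / (B - AK)
        = Real.sqrt (bfeG γ AK B / (B - AK) ^ 2) := by
      rw [Real.sqrt_div hg.le, Real.sqrt_sq (by linarith)]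
    rw [h1]
    congr 1
    rw [bfeG]
    field_simp
  have := hL.union hR
  rw [Set.Iic_union_Ici] at this
  exact hasDerivWithinAt_univ.mp this

lemma hasDerivAt_bfeF' {γ AK : ℝ} (hγ : 0 < γ) (hAK : 0 < AK) :
    ∀ A ∈ Set.Ioi (0:ℝ), HasDerivAt (bfeF γ AK) (bfeD γ AK A) A := by
  intro A hA
  rcases lt_trichotomy A AK with h | h | h
  · rw [show bfeD γ AK A = Real.sqrt (3 * γ / 2) / (Real.sqrt A * Real.sqrt (Real.sqrt A))
      from if_pos h.le]
    exact hasDerivAt_bfeF_of_lt hA h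
  · rw [h, show bfeD γ AK AK = Real.sqrt (3 * γ / 2) / (Real.sqrt AK * Real.sqrt (Real.sqrt AK))
      from if_pos le_rfl]
    exact hasDerivAt_bfeF_at hγ hAK
  · rw [show bfeD γ AK A = bfeSd γ AK A from if_neg (not_le.mpr h)]
    exact hasDerivAt_bfeF_of_gt hγ hAK h

lemma bfeRareD_antitone {γ : ℝ} (hγ : 0 < γ) {x y : ℝ} (hx : 0 < x) (hxy : x ≤ y) :
    Real.sqrt (3 * γ / 2) / (Real.sqrt y * Real.sqrt (Real.sqrt y))
      ≤ Real.sqrt (3 * γ / 2) / (Real.sqrt x * Real.sqrt (Real.sqrt x)) := by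
  have hsx : 0 < Real.sqrt x := Real.sqrt_pos.mpr hx
  have hssx : 0 < Real.sqrt (Real.sqrt x) := Real.sqrt_pos.mpr hsx
  have h1 : Real.sqrt x * Real.sqrt (Real.sqrt x) ≤ Real.sqrt y * Real.sqrt (Real.sqrt y) := by
    have h2 : Real.sqrt x ≤ Real.sqrt y := Real.sqrt_le_sqrt hxy
    have h3 : Real.sqrt (Real.sqrt x) ≤ Real.sqrt (Real.sqrt y) := Real.sqrt_le_sqrt h2
    exact mul_le_mul h2 h3 hssx.le (Real.sqrt_nonneg y)
  exact div_le_div_of_nonneg_left (Real.sqrt_nonneg _) (by positivity) h1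

lemma bfeD_antitoneOn {γ AK : ℝ} (hγ : 0 < γ) (hAK : 0 < AK) :
    AntitoneOn (bfeD γ AK) (Set.Ioi (0:ℝ)) := by
  intro x hx y hy hxy
  simp only [Set.mem_Ioi] at hx hy
  by_cases hy' : y ≤ AK
  · have hx' : x ≤ AK := le_trans hxy hy'
    rw [show bfeD γ AK y = _ from if_pos hy', show bfeD γ AK x = _ from if_pos hx']
    exact bfeRareD_antitone hγ hx hxy
  · push_neg at hy'
    rw [show bfeD γ AK y = bfeSd γ AK y from if_neg (not_le.mpr hy')]
    by_cases hx' : x ≤ AK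
    · rw [show bfeD γ AK x = _ from if_pos hx']
      calc bfeSd γ AK y
          ≤ Real.sqrt (3 * γ / 2) / (Real.sqrt AK * Real.sqrt (Real.sqrt AK)) :=
            bfeSd_le hγ hAK hy'
        _ ≤ Real.sqrt (3 * γ / 2) / (Real.sqrt x * Real.sqrt (Real.sqrt x)) :=
            bfeRareD_antitone hγ hx hx'
    · push_neg at hx'
      rw [show bfeD γ AK x = bfeSd γ AK x from if_neg (not_le.mpr hx')]
      exact bfeSd_antitoneOn hγ hAK hx' (hx'.trans_le hxy) hxy

lemma bfeF_concaveOn {γ AK : ℝ} (hγ : 0 < γ) (hAK : 0 < AK) :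
    ConcaveOn ℝ (Set.Ioi (0:ℝ)) (bfeF γ AK) := by
  have hD := hasDerivAt_bfeF' hγ hAK
  apply AntitoneOn.concaveOn_of_deriv (convex_Ioi 0)
  · exact fun A hA => ((hD A hA).continuousAt).continuousWithinAt
  · rw [interior_Ioi]
    exact fun A hA => ((hD A hA).differentiableAt).differentiableWithinAt
  · rw [interior_Ioi]
    intro x hx y hy hxy
    rw [(hD x hx).deriv, (hD y hy).deriv]
    exact bfeD_antitoneOn hγ hAK hx hy hxy

lemma bfe_branch_eq {γ AK A : ℝ} (hA : 0 < A) (hAK : 0 < AK) :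
    bfeBranch γ AK A = bfeF γ AK A := by
  have hq : ∀ x : ℝ, 0 < x → x ^ ((1:ℝ)/4) = Real.sqrt (Real.sqrt x) := by
    intro x hx
    rw [show (1:ℝ)/4 = 1/2 * (1/2) by norm_num, Real.rpow_mul hx.le,
      ← Real.sqrt_eq_rpow, ← Real.sqrt_eq_rpow]
  have h32 : ∀ x : ℝ, 0 < x → x ^ ((3:ℝ)/2) = x * Real.sqrt x := by
    intro x hx
    rw [show (3:ℝ)/2 = 1 + 1/2 by norm_num, Real.rpow_add hx, Real.rpow_one,
      ← Real.sqrt_eq_rpow]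
  unfold bfeBranch bfeF
  split_ifs with h
  · rw [hq A hA, hq AK hAK]
  · rw [h32 A hA, h32 AK hAK, bfeG]

/-- The blood flow wave-curve branch function is concave on `(0, ∞)`. -/
theorem bfe_branch_concave (γ AK : ℝ) (hγ : 0 < γ) (hAK : 0 < AK) :
    ConcaveOn ℝ (Set.Ioi (0 : ℝ)) (bfeBranch γ AK) := by
  have hF := bfeF_concaveOn hγ hAK
  refine ⟨hF.1, fun x hx y hy a b ha hb hab => ?_⟩
  rw [bfe_branch_eq (Set.mem_Ioi.mp (hF.1 hx hy ha hb hab)) hAK,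
    bfe_branch_eq (Set.mem_Ioi.mp hx) hAK, bfe_branch_eq (Set.mem_Ioi.mp hy) hAK]
  exact hF.2 hx hy ha hb hab
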